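/- Let m ≥ 1, let τ ∈ ℂ, and let α : Fin m → ℂ. Let U be an n×n complex unitary matrix whose minimal polynomial over ℂ is X^m − τ, and suppose that V := Σ_{i=0}^{m−1} α_i U^i is unitary. Then for every a with 0 ≤ a < m, Σ_{j=0}^{a−1} conj(τ)·conj(α_{(j−a) mod m})·α_j + Σ_{j=a}^{m−1} conj(α_{j−a})·α_j = δ_{a,0}, where δ_{a,0} is 1 if a = 0 and 0 otherwise. -/

import Mathlib

open Matrix Polynomial

theorem stmt1 {n m : ℕ} (hm : 1 ≤ m) (τ : ℂ) (α : Fin m → ℂ)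
    (U : Matrix (Fin n) (Fin n) ℂ)
    (hU : U * Uᴴ = 1 ∧ Uᴴ * U = 1)
    (hmin : minpoly ℂ U = X ^ m - Polynomial.C τ)
    (V : Matrix (Fin n) (Fin n) ℂ)
    (hV : V = ∑ i : Fin m, α i • U ^ (i : ℕ))
    (hVunitary : V * Vᴴ = 1 ∧ Vᴴ * V = 1) :
    ∀ a : Fin m,
      (∑ j ∈ Finset.univ.filter (fun j : Fin m => (j : ℕ) < (a : ℕ)),
          (starRingEnd ℂ) τ * (starRingEnd ℂ) (α (j - a)) * α j) +
      (∑ j ∈ Finset.univ.filter (fun j : Fin m => (a : ℕ) ≤ (j : ℕ)),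
          (starRingEnd ℂ) (α (j - a)) * α j) =
      if (a : ℕ) = 0 then 1 else 0 := by
  obtain ⟨hUU, hU'U⟩ := hU
  haveI : NeZero m := ⟨by omega⟩
  -- U ^ m = τ • 1
  have hUm : U ^ m = τ • 1 := by
    have h := minpoly.aeval ℂ U
    rw [hmin, map_sub, aeval_X_pow, aeval_C, sub_eq_zero,
      Algebra.algebraMap_eq_smul_one] at h
    exact h
  -- n is positive
  have hn : 0 < n := by
    rcases Nat.eq_zero_or_pos n with h | h
    · exfalso
      subst h
      have h0 : aeval U (1 : ℂ[X]) = 0 := Subsingleton.elim _ _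
      have := minpoly.min (A := ℂ) (x := U) monic_one h0
      rw [hmin, degree_X_pow_sub_C (by omega) τ, degree_one] at this
      exact absurd this (by simp; omega)
    · exact h
  have hsm : ∀ r s : ℂ, r • (1 : Matrix (Fin n) (Fin n) ℂ) = s • 1 → r = s := by
    intro r s h
    have := congrFun (congrFun h ⟨0, hn⟩) ⟨0, hn⟩
    simpa [Matrix.one_apply] using this
  -- powers cancel
  have hinvk : ∀ k : ℕ, (Uᴴ) ^ k * U ^ k = 1 := by
    intro k
    induction k with
    | zero => simp
    | succ k ih =>
      rw [pow_succ, pow_succ', mul_assoc, ← mul_assoc Uᴴ U, hU'U, one_mul, ih]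
  have htt : (starRingEnd ℂ) τ * τ = 1 := by
    have h := hinvk m
    rw [← conjTranspose_pow, hUm, conjTranspose_smul, conjTranspose_one,
      smul_mul_smul_comm, one_mul] at h
    have : ((starRingEnd ℂ) τ * τ) • (1 : Matrix (Fin n) (Fin n) ℂ) = (1 : ℂ) • 1 := by
      simpa using h
    exact hsm _ _ this
  -- inverse powers
  have hkey : ∀ k : ℕ, k ≤ m → (Uᴴ) ^ k = (starRingEnd ℂ) τ • U ^ (m - k) := by
    intro k hk
    have h1 : U ^ k * ((starRingEnd ℂ) τ • U ^ (m - k)) = 1 := by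
      rw [mul_smul_comm, ← pow_add, Nat.add_sub_cancel' hk, hUm, smul_smul, htt, one_smul]
    calc (Uᴴ) ^ k = (Uᴴ) ^ k * (U ^ k * ((starRingEnd ℂ) τ • U ^ (m - k))) := by
            rw [h1, mul_one]
      _ = ((Uᴴ) ^ k * U ^ k) * ((starRingEnd ℂ) τ • U ^ (m - k)) := by rw [mul_assoc]
      _ = (starRingEnd ℂ) τ • U ^ (m - k) := by rw [hinvk, one_mul]
  -- the key product formula
  have hprod : ∀ i j : Fin m, (Uᴴ) ^ (i : ℕ) * U ^ (j : ℕ) =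
      (if (i : ℕ) ≤ (j : ℕ) then (1 : ℂ) else (starRingEnd ℂ) τ) • U ^ ((j - i : Fin m) : ℕ) := by
    intro i j
    rcases le_or_gt (i : ℕ) (j : ℕ) with h | h
    · rw [if_pos h]
      have hsub : ((j - i : Fin m) : ℕ) = (j : ℕ) - (i : ℕ) := Fin.sub_val_of_le h
      have : U ^ (j : ℕ) = U ^ (i : ℕ) * U ^ ((j : ℕ) - (i : ℕ)) := by
        rw [← pow_add, Nat.add_sub_cancel' h]
      rw [this, ← mul_assoc, hinvk, one_mul, hsub, one_smul]
    · rw [if_neg (not_le.mpr h)]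
      have hsub : ((j - i : Fin m) : ℕ) = m - ((i : ℕ) - (j : ℕ)) := by
        have hi := i.isLt
        have hj := j.isLt
        have hlt : m - (i : ℕ) + (j : ℕ) < m := by omega
        rw [Fin.sub_def]
        simp only [Fin.val_mk]
        rw [Nat.mod_eq_of_lt hlt]
        omega
      have hUi : (Uᴴ) ^ (i : ℕ) = (Uᴴ) ^ ((i : ℕ) - (j : ℕ)) * (Uᴴ) ^ (j : ℕ) := by
        rw [← pow_add, Nat.sub_add_cancel h.le]
      rw [hUi, mul_assoc, hinvk, mul_one, hkey _ (by omega), hsub]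
  have hdeg : (minpoly ℂ U).natDegree = m := by
    rw [hmin, natDegree_X_pow_sub_C]
  have hcond : ∀ a j : Fin m, (((j - a : Fin m)) : ℕ) ≤ (j : ℕ) ↔ (a : ℕ) ≤ (j : ℕ) := by
    intro a j
    rcases le_or_gt (a : ℕ) (j : ℕ) with h | h
    · rw [Fin.sub_val_of_le h]
      constructor <;> intro <;> omega
    · have ha := a.isLt
      have hlt : m - (a : ℕ) + (j : ℕ) < m := by omega
      rw [Fin.sub_def]
      simp only [Fin.val_mk]
      rw [Nat.mod_eq_of_lt hlt]
      constructor <;> intro <;> omega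
  set S : Fin m → ℂ := fun a => ∑ j : Fin m,
      (if (a : ℕ) ≤ (j : ℕ) then (1 : ℂ) else (starRingEnd ℂ) τ) *
        ((starRingEnd ℂ) (α (j - a)) * α j) with hS
  have hVH : Vᴴ = ∑ i : Fin m, (starRingEnd ℂ) (α i) • (Uᴴ) ^ (i : ℕ) := by
    rw [hV, conjTranspose_sum]
    refine Finset.sum_congr rfl fun i _ => ?_
    rw [conjTranspose_smul, conjTranspose_pow]
    rfl
  have hVV : Vᴴ * V = ∑ a : Fin m, S a • U ^ (a : ℕ) := by
    calc Vᴴ * V = ∑ i : Fin m, ∑ j : Fin m,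
          ((starRingEnd ℂ) (α i) * α j) • ((Uᴴ) ^ (i : ℕ) * U ^ (j : ℕ)) := by
          rw [hVH, hV, Finset.sum_mul_sum]
          exact Finset.sum_congr rfl fun i _ => Finset.sum_congr rfl fun j _ => by
            rw [smul_mul_smul_comm]
      _ = ∑ j : Fin m, ∑ i : Fin m,
          ((if (i : ℕ) ≤ (j : ℕ) then (1 : ℂ) else (starRingEnd ℂ) τ) *
            ((starRingEnd ℂ) (α i) * α j)) • U ^ ((j - i : Fin m) : ℕ) := by
          rw [Finset.sum_comm]
          exact Finset.sum_congr rfl fun j _ => Finset.sum_congr rfl fun i _ => by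
            rw [hprod, smul_smul, mul_comm]
      _ = ∑ j : Fin m, ∑ a : Fin m,
          ((if (a : ℕ) ≤ (j : ℕ) then (1 : ℂ) else (starRingEnd ℂ) τ) *
            ((starRingEnd ℂ) (α (j - a)) * α j)) • U ^ (a : ℕ) := by
          refine Finset.sum_congr rfl fun j _ => ?_
          refine (Fintype.sum_equiv (Equiv.subLeft j) _ _ fun a => ?_).symm
          have h1 : (j - (j - a) : Fin m) = a := sub_sub_cancel j a
          simp only [Equiv.subLeft_apply, h1]
          by_cases h : (a : ℕ) ≤ (j : ℕ)
          · rw [if_pos h, if_pos ((hcond a j).mpr h)]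
          · rw [if_neg h, if_neg fun hh => h ((hcond a j).mp hh)]
      _ = ∑ a : Fin m, S a • U ^ (a : ℕ) := by
          rw [Finset.sum_comm]
          exact Finset.sum_congr rfl fun a _ => by rw [hS, ← Finset.sum_smul]
  have hone : ∑ a : Fin m, (if (a : ℕ) = 0 then (1 : ℂ) else 0) • U ^ (a : ℕ)
      = (1 : Matrix (Fin n) (Fin n) ℂ) := by
    rw [Finset.sum_eq_single (0 : Fin m)]
    · simp
    · intro b _ hb
      rw [if_neg (Fin.val_ne_zero_iff.mpr hb), zero_smul]
    · simp
  have hli := linearIndependent_pow (K := ℂ) U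
  rw [hdeg] at hli
  have h0 : ∑ a : Fin m, (S a - (if (a : ℕ) = 0 then (1 : ℂ) else 0)) • U ^ (a : ℕ) = 0 := by
    simp only [sub_smul]
    rw [Finset.sum_sub_distrib, ← hVV, hone, hVunitary.2, sub_self]
  have hSa := Fintype.linearIndependent_iff.mp hli _ h0
  intro a
  have hSa' : S a = if (a : ℕ) = 0 then 1 else 0 := sub_eq_zero.mp (hSa a)
  have split : S a =
      (∑ j ∈ Finset.univ.filter (fun j : Fin m => ¬ (a : ℕ) ≤ (j : ℕ)),
        (starRingEnd ℂ) τ * ((starRingEnd ℂ) (α (j - a)) * α j)) +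
      ∑ j ∈ Finset.univ.filter (fun j : Fin m => (a : ℕ) ≤ (j : ℕ)),
        (starRingEnd ℂ) (α (j - a)) * α j := by
    rw [hS]
    beta_reduce
    rw [← Finset.sum_filter_add_sum_filter_not Finset.univ
      (fun j : Fin m => (a : ℕ) ≤ (j : ℕ)), add_comm]
    congr 1
    · exact Finset.sum_congr rfl fun j hj => by
        rw [if_neg (Finset.mem_filter.mp hj).2]
    · exact Finset.sum_congr rfl fun j hj => by
        rw [if_pos (Finset.mem_filter.mp hj).2, one_mul]
  rw [← hSa', split]
  congr 1
  refine Finset.sum_congr (by ext j; simp [not_le]) fun j hj => by rw [mul_assoc]
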